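/- Assume each E_i is nontrivial (has dimension at least 1), and suppose f additionally satisfies the strong convexity inequality f(y) ≥ f(x) + ⟨∇f(x), y − x⟩ + (μ/2)‖y − x‖_L² for all x, y ∈ E, for some μ ≥ 0. Then μ ≤ 1. -/

import Mathlib

open scoped RealInnerProductSpace
open MeasureTheory

noncomputable section

variable {n : ℕ} {E : Fin n → Type*} [∀ i, NormedAddCommGroup (E i)]
  [∀ i, InnerProductSpace ℝ (E i)] [∀ i, FiniteDimensional ℝ (E i)]

/-- `U i t`: embedding of the `i`-th block into the product space. -/
def blockEmbed (i : Fin n) (t : E i) : PiLp 2 E :=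
  (WithLp.equiv 2 (∀ j, E j)).symm (Pi.single i t)

set_option linter.unusedSectionVars false in
lemma blockEmbed_apply (i j : Fin n) (t : E i) : (blockEmbed i t) j = Pi.single i t j := rfl

lemma blockEmbed_smul (i : Fin n) (s : ℝ) (t : E i) :
    blockEmbed i (s • t) = s • blockEmbed i t := by
  ext j
  simp [blockEmbed_apply, Pi.single_smul]

lemma inner_blockEmbed (g : PiLp 2 E) (i : Fin n) (t : E i) :
    ⟪g, blockEmbed i t⟫ = ⟪g i, t⟫ := by
  rw [PiLp.inner_apply]
  rw [Finset.sum_eq_single i]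
  · simp [blockEmbed_apply]
  · intro j _ hj
    simp [blockEmbed_apply, Pi.single_eq_of_ne hj]
  · simp

/-- The strong convexity parameter of `f` with respect to `‖·‖_L` is at most `1`:
if each `Eᵢ` is nontrivial and `f` is `μ`-strongly convex w.r.t. `‖·‖_L`, then `μ ≤ 1`. -/
theorem strong_convexity_parameter_le_one
    [∀ i, Nontrivial (E i)]
    (hn : 0 < n)
    (L : Fin n → ℝ) (hL : ∀ i, 0 < L i)
    (f : PiLp 2 E → ℝ) (hfdiff : Differentiable ℝ f) (hfconv : ConvexOn ℝ Set.univ f)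
    (hLip : ∀ (x : PiLp 2 E) (i : Fin n) (t : E i),
      ‖(gradient f (x + blockEmbed i t)) i - (gradient f x) i‖ ≤ L i * ‖t‖)
    (μ : ℝ) (hμ : 0 ≤ μ)
    (hsc : ∀ x y : PiLp 2 E,
      f x + ⟪gradient f x, y - x⟫ + μ / 2 * ∑ i, L i * ‖y i - x i‖ ^ 2 ≤ f y) :
    μ ≤ 1 := by
  classical
  set i : Fin n := ⟨0, hn⟩
  obtain ⟨t, ht⟩ : ∃ t : E i, t ≠ 0 := exists_ne 0
  have ht2 : (0:ℝ) < ‖t‖ ^ 2 := pow_pos (norm_pos_iff.mpr ht) 2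
  set x : PiLp 2 E := 0 with hx
  set v : PiLp 2 E := blockEmbed i t with hv
  -- fderiv in terms of gradient
  have hgrad : ∀ (y w : PiLp 2 E), (fderiv ℝ f y) w = ⟪gradient f y, w⟫ := by
    intro y w
    have h := (hfdiff y).hasGradientAt
    rw [hasGradientAt_iff_hasFDerivAt] at h
    rw [h.fderiv]
    rfl
  -- derivative of s ↦ f (x + s • v)
  have hcurve : ∀ s : ℝ, HasDerivAt (fun s : ℝ => x + s • v) v s := by
    intro s
    simpa using ((hasDerivAt_id s).smul_const v).const_add x
  have hkey : ∀ s : ℝ,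
      HasDerivAt (fun s : ℝ => f (x + s • v)) ⟪(gradient f (x + s • v)) i, t⟫ s := by
    intro s
    have := (hfdiff (x + s • v)).hasFDerivAt.comp_hasDerivAt s (hcurve s)
    rwa [hgrad, hv, inner_blockEmbed] at this
  set c : ℝ := ⟪(gradient f x) i, t⟫ with hc
  set φ : ℝ → ℝ := fun s => f (x + s • v) - s * c - L i / 2 * s ^ 2 * ‖t‖ ^ 2 with hφ
  have hφd : ∀ s : ℝ, HasDerivAt φ
      (⟪(gradient f (x + s • v)) i, t⟫ - c - L i * s * ‖t‖ ^ 2) s := by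
    intro s
    have h1 := (hkey s).sub ((hasDerivAt_id s).mul_const c)
    have h2 : HasDerivAt (fun s : ℝ => L i / 2 * s ^ 2 * ‖t‖ ^ 2)
        (L i * s * ‖t‖ ^ 2) s := by
      have := ((hasDerivAt_pow 2 s).const_mul (L i / 2)).mul_const (‖t‖ ^ 2)
      convert this using 1
      · rfl
      · rfl
      · rw [show (2:ℕ) - 1 = 1 from rfl]
        push_cast
        ring
    convert h1.sub h2 using 1
    · rfl
    · rfl
    · ext; simp [hφ]
    · ring
  have hanti : AntitoneOn φ (Set.Icc (0:ℝ) 1) := by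
    apply antitoneOn_of_deriv_nonpos (convex_Icc 0 1)
    · exact Continuous.continuousOn (by
        exact continuous_iff_continuousAt.2 fun s => (hφd s).continuousAt)
    · intro s hs
      exact ((hφd s).differentiableAt).differentiableWithinAt
    · intro s hs
      rw [interior_Icc] at hs
      rw [(hφd s).deriv]
      have hxs : x + s • v = x + blockEmbed i (s • t) := by
        rw [blockEmbed_smul]
      have hlip := hLip x i (s • t)
      rw [← hxs] at hlip
      have hb : ⟪(gradient f (x + s • v)) i - (gradient f x) i, t⟫
          ≤ L i * s * ‖t‖ ^ 2 := by
        calc ⟪(gradient f (x + s • v)) i - (gradient f x) i, t⟫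
            ≤ ‖(gradient f (x + s • v)) i - (gradient f x) i‖ * ‖t‖ :=
              real_inner_le_norm _ _
          _ ≤ (L i * ‖s • t‖) * ‖t‖ := by
              apply mul_le_mul_of_nonneg_right hlip (norm_nonneg _)
          _ = L i * s * ‖t‖ ^ 2 := by
              rw [norm_smul, Real.norm_eq_abs, abs_of_pos hs.1]; ring
      rw [inner_sub_left] at hb
      linarith
  have h10 := hanti (Set.left_mem_Icc.2 zero_le_one) (Set.right_mem_Icc.2 zero_le_one) zero_le_one
  have e1 : φ 1 = f (x + v) - c - L i / 2 * ‖t‖ ^ 2 := by simp [hφ]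
  have e0 : φ 0 = f x := by simp [hφ]
  rw [e1, e0] at h10
  have hdesc : f (x + v) ≤ f x + c + L i / 2 * ‖t‖ ^ 2 := by linarith
  -- strong convexity at x, x + v
  have hsum : ∑ j, L j * ‖(x + v) j - x j‖ ^ 2 = L i * ‖t‖ ^ 2 := by
    rw [Finset.sum_eq_single i]
    · simp [hv, blockEmbed_apply]
    · intro j _ hj
      simp [hv, blockEmbed_apply, Pi.single_eq_of_ne hj]
    · simp
  have hsc' := hsc x (x + v)
  rw [hsum, add_sub_cancel_left, hv, inner_blockEmbed, ← hc, ← hv] at hsc'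
  have hLt : (0:ℝ) < L i * ‖t‖ ^ 2 := mul_pos (hL i) ht2
  nlinarith [hsc', hdesc, hLt]
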